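/- Let H be a connected bipartite graph of order at least three. Then H is adjacency k-resolved for every integer k with 2 ≤ k ≤ r(H), where r(H) is the radius of H. -/

import Mathlib

open SimpleGraph

/-- The strong product of two simple graphs. -/
def strongProd {α β : Type*} (G : SimpleGraph α) (H : SimpleGraph β) :
    SimpleGraph (α × β) where
  Adj x y := (x.1 = y.1 ∧ H.Adj x.2 y.2) ∨ (x.2 = y.2 ∧ G.Adj x.1 y.1) ∨
      (G.Adj x.1 y.1 ∧ H.Adj x.2 y.2)
  symm := by
    refine ⟨?_⟩
    rintro x y (⟨h1, h2⟩ | ⟨h1, h2⟩ | ⟨h1, h2⟩)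
    · exact Or.inl ⟨h1.symm, h2.symm⟩
    · exact Or.inr (Or.inl ⟨h1.symm, h2.symm⟩)
    · exact Or.inr (Or.inr ⟨h1.symm, h2.symm⟩)
  loopless := by
    refine ⟨?_⟩
    rintro x (⟨_, h⟩ | ⟨_, h⟩ | ⟨h, _⟩)
    · exact H.irrefl h
    · exact G.irrefl h
    · exact G.irrefl h

/-- A set `S` is a local metric generator for `G` if every pair of adjacent
vertices is distinguished by some element of `S`. -/
def IsLocalMetricGenerator {α : Type*} (G : SimpleGraph α) (S : Set α) : Prop :=
  ∀ u v : α, G.Adj u v → ∃ s ∈ S, G.dist u s ≠ G.dist v s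

/-- The local metric dimension of a graph. -/
noncomputable def localMetricDim {α : Type*} [Fintype α] (G : SimpleGraph α) : ℕ :=
  sInf {n | ∃ S : Finset α, S.card = n ∧ IsLocalMetricGenerator G ↑S}

/-- A set `S` is a metric generator for `G` if every pair of distinct
vertices is distinguished by some element of `S`. -/
def IsMetricGenerator {α : Type*} (G : SimpleGraph α) (S : Set α) : Prop :=
  ∀ u v : α, u ≠ v → ∃ s ∈ S, G.dist u s ≠ G.dist v s

/-- The metric dimension of a graph. -/
noncomputable def metricDim {α : Type*} [Fintype α] (G : SimpleGraph α) : ℕ :=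
  sInf {n | ∃ S : Finset α, S.card = n ∧ IsMetricGenerator G ↑S}

/-- The eccentricity of a vertex: the maximum distance to another vertex. -/
noncomputable def eccentricity {α : Type*} (G : SimpleGraph α) (v : α) : ℕ :=
  sSup {d | ∃ u, G.dist v u = d}

/-- The diameter of a graph: maximum eccentricity. -/
noncomputable def graphDiam {α : Type*} (G : SimpleGraph α) : ℕ :=
  sSup {d | ∃ v, eccentricity G v = d}

/-- The radius of a graph: minimum eccentricity. -/
noncomputable def graphRadius {α : Type*} (G : SimpleGraph α) : ℕ :=
  sInf {d | ∃ v, eccentricity G v = d}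

/-- The interval `I[x,y]`: vertices lying on some shortest `x`–`y` path. -/
def interval {α : Type*} (G : SimpleGraph α) (x y : α) : Set α :=
  {w | G.dist x w + G.dist w y = G.dist x y}

/-- A graph is adjacency `k`-resolved if for every pair of adjacent vertices
`x, y` there is a vertex `w` with `d(y,w) ≥ k` and `x ∈ I[y,w]`, or
`d(x,w) ≥ k` and `y ∈ I[x,w]`. -/
def AdjKResolved {α : Type*} (G : SimpleGraph α) (k : ℕ) : Prop :=
  ∀ x y : α, G.Adj x y →
    ∃ w : α, (k ≤ G.dist y w ∧ x ∈ interval G y w) ∨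
      (k ≤ G.dist x w ∧ y ∈ interval G x w)

/-- The true twin equivalence relation: `u ≈ v` iff `N[u] = N[v]`. -/
def trueTwinSetoid {α : Type*} (G : SimpleGraph α) : Setoid α where
  r u v := insert u (G.neighborSet u) = insert v (G.neighborSet v)
  iseqv := ⟨fun _ => rfl, Eq.symm, Eq.trans⟩

lemma walk_parity {β : Type*} (H : SimpleGraph β) (c : H.Coloring (Fin 2)) :
    ∀ {x w : β} (p : H.Walk x w), (c x = c w ↔ Even p.length) := by
  intro x w p
  induction p with
  | nil => simp
  | @cons a b d h p ih =>
    have hne : c a ≠ c b := c.valid h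
    have key : ∀ u v t : Fin 2, u ≠ v → ((u = t) ↔ ¬ (v = t)) := by decide
    simp only [Walk.length_cons, Nat.even_add_one]
    rw [key _ _ _ hne, ih]

lemma dist_parity {β : Type*} {H : SimpleGraph β} (hH : H.Connected)
    (c : H.Coloring (Fin 2)) (x w : β) : (c x = c w ↔ Even (H.dist x w)) := by
  obtain ⟨p, hp⟩ := (hH x w).exists_walk_length_eq_dist
  rw [← hp]
  exact walk_parity H c p

/-- a connected bipartite graph of order at least three is
adjacency `k`-resolved for every `2 ≤ k ≤ r(H)`. -/
theorem stmt2 {β : Type*} [Fintype β] (H : SimpleGraph β) (hH : H.Connected)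
    (hbip : H.Colorable 2) (hn : 3 ≤ Fintype.card β) :
    ∀ k : ℕ, 2 ≤ k → k ≤ graphRadius H → AdjKResolved H k := by
  intro k hk2 hkr x y hxy
  obtain ⟨c⟩ := hbip
  -- find w at distance ecc(x) from x
  have hS : {d | ∃ u, H.dist x u = d}.Nonempty := ⟨_, x, rfl⟩
  have hBdd : BddAbove {d | ∃ u, H.dist x u = d} := by
    have he : {d | ∃ u, H.dist x u = d} = Set.range (fun u => H.dist x u) := rfl
    rw [he]; exact (Set.finite_range _).bddAbove
  obtain ⟨w, hw⟩ := Nat.sSup_mem hS hBdd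
  have hrad : graphRadius H ≤ eccentricity H x := Nat.sInf_le ⟨x, rfl⟩
  have hkw : k ≤ H.dist x w := by
    have : eccentricity H x = H.dist x w := hw.symm
    omega
  -- distances differ
  have hxy1 : H.dist x y = 1 := dist_eq_one_iff_adj.mpr hxy
  have hyx1 : H.dist y x = 1 := by rw [dist_comm]; exact hxy1
  have hcne : c x ≠ c y := c.valid hxy
  have hne : H.dist x w ≠ H.dist y w := by
    intro heq
    have p1 := dist_parity hH c x w
    have p2 := dist_parity hH c y w
    rw [heq] at p1
    have : c x = c w ↔ c y = c w := p1.trans p2.symm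
    have key2 : ∀ u v t : Fin 2, u ≠ v → ((u = t) ↔ (v = t)) → False := by decide
    exact key2 _ _ _ hcne this
  have ht1 : H.dist y w ≤ H.dist y x + H.dist x w := hH.dist_triangle
  have ht2 : H.dist x w ≤ H.dist x y + H.dist y w := hH.dist_triangle
  rcases lt_or_gt_of_ne hne with h | h
  · -- dist x w < dist y w : so dist y w = dist x w + 1, x ∈ I[y,w]
    refine ⟨w, Or.inl ⟨by omega, ?_⟩⟩
    show H.dist y x + H.dist x w = H.dist y w
    omega
  · -- dist y w < dist x w : y ∈ I[x,w]
    refine ⟨w, Or.inr ⟨hkw, ?_⟩⟩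
    show H.dist x y + H.dist y w = H.dist x w
    omega
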